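/- Let o ∈ [0,1]^d, z its rounding, σ a permutation sorting u^k = |o^k − 0.5| ascending, and p ≥ 1. Fix a threshold α ≥ 0 and define t = min{ν ∈ {1,…,d} : ‖o − flip(z,{σ(1),…,σ(ν)})‖_p > α} (assuming such ν exists). Then every binary vector Y ∈ {0,1}^d whose Hamming distance to z is at least t satisfies ‖o − Y‖_p > α. Equivalently, {Y ∈ {0,1}^d : ‖o − Y‖_p ≤ α} ⊆ {Y : Hamming(Y, z) < t}. -/

import Mathlib

noncomputable def lpN {d : ℕ} (p : ℝ) (v : Fin d → ℝ) : ℝ :=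
  (∑ k, |v k| ^ p) ^ (1 / p)

noncomputable def rnd {d : ℕ} (o : Fin d → ℝ) : Fin d → ℝ :=
  fun k => if (0.5 : ℝ) ≤ o k then 1 else 0

noncomputable def flipSet {d : ℕ} (z : Fin d → ℝ) (S : Finset (Fin d)) : Fin d → ℝ :=
  fun k => if k ∈ S then 1 - z k else z k

def firstIdx {d : ℕ} (σ : Equiv.Perm (Fin d)) (ν : ℕ) : Finset (Fin d) :=
  (Finset.univ.filter (fun i : Fin d => (i : ℕ) < ν)).image σ

/-- Hamming distance between `Y` and `z` -/
noncomputable def hamming {d : ℕ} (Y z : Fin d → ℝ) : ℕ :=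
  (Finset.univ.filter (fun k : Fin d => Y k ≠ z k)).card

lemma aux_sum_cmp {ι : Type*} [DecidableEq ι] (S T : Finset ι) (f : ι → ℝ)
    (hf : ∀ j, 0 ≤ f j) (hcard : T.card ≤ S.card)
    (hmono : ∀ k ∈ T, ∀ j ∉ T, f k ≤ f j) :
    ∑ k ∈ T, f k ≤ ∑ k ∈ S, f k := by
  rw [← Finset.sum_inter_add_sum_sdiff T S f, ← Finset.sum_inter_add_sum_sdiff S T f,
    Finset.inter_comm S T]
  refine add_le_add_right ?_ _
  rcases (T \ S).eq_empty_or_nonempty with he | hne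
  · rw [he, Finset.sum_empty]
    exact Finset.sum_nonneg fun j _ => hf j
  · have hc : (T \ S).card ≤ (S \ T).card := by
      have h1 := Finset.card_sdiff_add_card_inter T S
      have h2 := Finset.card_sdiff_add_card_inter S T
      rw [Finset.inter_comm S T] at h2
      omega
    have hne2 : (S \ T).Nonempty := by
      rw [← Finset.card_pos]
      exact lt_of_lt_of_le (Finset.card_pos.mpr hne) hc
    obtain ⟨b₀, hb₀, hmin⟩ := Finset.exists_min_image (S \ T) f hne2
    have hb₀T : b₀ ∉ T := (Finset.mem_sdiff.mp hb₀).2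
    calc ∑ k ∈ T \ S, f k ≤ (T \ S).card • f b₀ :=
          Finset.sum_le_card_nsmul _ _ _ fun x hx =>
            hmono x (Finset.mem_sdiff.mp hx).1 b₀ hb₀T
      _ ≤ (S \ T).card • f b₀ := by
          exact nsmul_le_nsmul_left (hf b₀) hc
      _ ≤ ∑ k ∈ S \ T, f k := Finset.card_nsmul_le_sum _ _ _ fun x hx => hmin x hx

theorem stmt6 {d : ℕ} (hd : 1 ≤ d) (p : ℝ) (hp : 1 ≤ p)
    (o : Fin d → ℝ) (ho : ∀ k, o k ∈ Set.Icc (0 : ℝ) 1)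
    (σ : Equiv.Perm (Fin d))
    (hσ : ∀ i j : Fin d, i ≤ j → |o (σ i) - 0.5| ≤ |o (σ j) - 0.5|)
    (α : ℝ) (hα : 0 ≤ α) (t : ℕ)
    (ht : IsLeast {ν : ℕ | 1 ≤ ν ∧ ν ≤ d ∧
        α < lpN p (fun k => o k - flipSet (rnd o) (firstIdx σ ν) k)} t) :
    ∀ Y : Fin d → ℝ, (∀ k, Y k = 0 ∨ Y k = 1) → t ≤ hamming Y (rnd o) →
      α < lpN p (fun k => o k - Y k) := by
  obtain ⟨⟨ht1, htd, htα⟩, _⟩ := ht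
  intro Y hY hH
  set z := rnd o with hz
  set u : Fin d → ℝ := fun k => |o k - 0.5| with hu
  have hu0 : ∀ k, 0 ≤ u k := fun k => abs_nonneg _
  have hu5 : ∀ k, u k ≤ 0.5 := by
    intro k
    have h1 := (ho k).1; have h2 := (ho k).2
    rw [hu, abs_le]; constructor <;> norm_num <;> linarith
  have habs0 : ∀ k, |o k - z k| = 0.5 - u k := by
    intro k
    have h1 := (ho k).1; have h2 := (ho k).2
    simp only [hz, rnd, hu]
    split_ifs with h
    · rw [abs_of_nonpos (by linarith), abs_of_nonneg (by linarith)]; ring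
    · rw [abs_of_nonneg (by linarith), abs_of_nonpos (by linarith)]; ring
  have habs1 : ∀ k, |o k - (1 - z k)| = 0.5 + u k := by
    intro k
    have h1 := (ho k).1; have h2 := (ho k).2
    simp only [hz, rnd, hu]
    split_ifs with h
    · rw [abs_of_nonneg (by linarith), abs_of_nonneg (by linarith)]; ring
    · push_neg at h
      rw [abs_of_nonpos (by linarith), abs_of_nonpos (by linarith)]; ring
  -- general sum computation
  set g : Fin d → ℝ := fun k => (0.5 + u k) ^ p with hg
  set hfun : Fin d → ℝ := fun k => (0.5 - u k) ^ p with hh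
  have hsum : ∀ (W : Fin d → ℝ), (∀ k, W k = 1 - z k ∨ W k = z k) →
      ∑ k, |o k - W k| ^ p
        = ∑ k, hfun k + ∑ k ∈ Finset.univ.filter (fun k => W k ≠ z k), (g k - hfun k) := by
    intro W hW
    have key : ∀ k, |o k - W k| ^ p
        = hfun k + (if W k ≠ z k then g k - hfun k else 0) := by
      intro k
      rcases hW k with h | h
      · by_cases hzk : (1 : ℝ) - z k = z k
        · rw [h, hzk, habs0, if_neg (by simp)]; ring
        · rw [h, habs1, if_pos hzk]; ring
      · rw [h, habs0, if_neg (by simp)]; ring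
    rw [Finset.sum_congr rfl (fun k _ => key k), Finset.sum_add_distrib,
      Finset.sum_filter]
  -- nonneg of g - h and monotonicity in u
  have hgh : ∀ k j : Fin d, u k ≤ u j → g k - hfun k ≤ g j - hfun j := by
    intro k j hkj
    have hp0 : 0 ≤ p := by linarith
    have h1 : g k ≤ g j :=
      Real.rpow_le_rpow (by linarith [hu0 k]) (by linarith) hp0
    have h2 : hfun j ≤ hfun k :=
      Real.rpow_le_rpow (by linarith [hu5 j]) (by linarith) hp0
    linarith
  have hf0 : ∀ k, 0 ≤ g k - hfun k := by
    intro k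
    have := hgh k k le_rfl
    have : hfun k ≤ g k :=
      Real.rpow_le_rpow (by linarith [hu5 k]) (by linarith [hu0 k]) (by linarith)
    linarith
  -- the two sums
  set T := firstIdx σ t with hT
  have hTmem : ∀ k : Fin d, k ∈ T ↔ ((σ.symm k : Fin d) : ℕ) < t := by
    intro k
    simp only [hT, firstIdx, Finset.mem_image, Finset.mem_filter, Finset.mem_univ, true_and]
    constructor
    · rintro ⟨i, hi, rfl⟩; simpa using hi
    · intro hk; exact ⟨σ.symm k, hk, by simp⟩
  have hTcard : T.card = t := by
    rw [hT, firstIdx, Finset.card_image_of_injective _ σ.injective]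
    rw [show (Finset.univ.filter (fun i : Fin d => (i:ℕ) < t)) =
        Finset.attachFin (Finset.range t)
          (fun m hm => lt_of_lt_of_le (Finset.mem_range.mp hm) htd) by
      ext i; simp [Finset.mem_attachFin]]
    simp [Finset.card_attachFin]
  have hflipW : ∀ k, flipSet z T k = 1 - z k ∨ flipSet z T k = z k := by
    intro k; simp only [flipSet]; split_ifs <;> simp
  have hflipfilter : Finset.univ.filter (fun k => flipSet z T k ≠ z k) ⊆ T := by
    intro k hk
    rw [Finset.mem_filter] at hk; simp only [flipSet] at hk
    by_contra hkT
    rw [if_neg hkT] at hk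
    exact hk.2 rfl
  have hYW : ∀ k, Y k = 1 - z k ∨ Y k = z k := by
    intro k
    have hzk : z k = 0 ∨ z k = 1 := by
      simp only [hz, rnd]; split_ifs <;> simp
    rcases hY k with h | h <;> rcases hzk with h' | h' <;> rw [h, h'] <;> norm_num
  -- key inequality between the filtered sums
  set S := Finset.univ.filter (fun k => Y k ≠ z k) with hS
  have hmono : ∀ k ∈ T, ∀ j ∉ T, g k - hfun k ≤ g j - hfun j := by
    intro k hk j hj
    apply hgh
    rw [hTmem] at hk hj
    push_neg at hj
    have : σ.symm k ≤ σ.symm j := by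
      have : ((σ.symm k : Fin d) : ℕ) ≤ ((σ.symm j : Fin d) : ℕ) := by omega
      exact this
    have := hσ (σ.symm k) (σ.symm j) this
    simpa [hu] using this
  have hcmp : ∑ k ∈ T, (g k - hfun k) ≤ ∑ k ∈ S, (g k - hfun k) := by
    apply aux_sum_cmp S T _ hf0 _ hmono
    rw [hTcard]; exact hH
  have hsums : ∑ k, |o k - flipSet z T k| ^ p ≤ ∑ k, |o k - Y k| ^ p := by
    rw [hsum _ hflipW, hsum _ hYW]
    refine add_le_add_right (le_trans ?_ hcmp) _
    exact Finset.sum_le_sum_of_subset_of_nonneg hflipfilter (fun k _ _ => hf0 k)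
  refine lt_of_lt_of_le htα ?_
  simp only [lpN]
  apply Real.rpow_le_rpow _ hsums (by positivity)
  exact Finset.sum_nonneg fun k _ => Real.rpow_nonneg (abs_nonneg _) p
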